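/- The possible signatures [2^{n_2} 3^{n_3} …] satisfying Σ_{k≥2} n_k·C(k,2) = C(5,2) = 10, for which in addition n_k = 0 for k > 5 and the constraints of Lemma (largepoint) hold, are exactly: [5^1], [2^4 4^1], [2^4 3^2], [2^7 3^1], [2^{10}]; in particular the solutions [2^1 3^1 4^1] and [2^1 3^3] of the counting equation do not satisfy the constraints. -/

import Mathlib

/-- The constraint of Lemma (largepoint) for `ℓ = 5` lines, in the sharp form used in
the paper (not counting the contribution of the big point itself): if there is a
point of multiplicity `5 − c`, then `Σ_k n_k·C(k−1,2) ≤ C(c,2) + C((5−c)−1,2)`. -/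
def LargepointConstraint5 (n : ℕ → ℕ) : Prop :=
  ∀ c ≤ 5, 1 ≤ n (5 - c) →
    (∑ k ∈ Finset.Icc 2 5, n k * Nat.choose (k - 1) 2)
      ≤ Nat.choose c 2 + Nat.choose (5 - c - 1) 2

lemma sum_expand (n : ℕ → ℕ) :
    (∑ k ∈ Finset.Icc 2 5, n k * Nat.choose k 2) = n 2 + n 3 * 3 + n 4 * 6 + n 5 * 10 := by
  rw [show Finset.Icc 2 5 = {2,3,4,5} by rfl]
  simp [Finset.sum_insert]
  rw [show Nat.choose 4 2 = 6 from rfl, show Nat.choose 5 2 = 10 from rfl]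
  ring

lemma sum_expand' (n : ℕ → ℕ) :
    (∑ k ∈ Finset.Icc 2 5, n k * Nat.choose (k - 1) 2) = n 3 + n 4 * 3 + n 5 * 6 := by
  rw [show Finset.Icc 2 5 = {2,3,4,5} by rfl]
  norm_num [Finset.sum_insert]
  rw [show Nat.choose 4 2 = 6 from rfl]
  ring

lemma funeq (n m : ℕ → ℕ) (h0 : ∀ k, k < 2 ∨ 5 < k → n k = 0)
    (h0' : ∀ k, k < 2 ∨ 5 < k → m k = 0)
    (h2 : n 2 = m 2) (h3 : n 3 = m 3) (h4 : n 4 = m 4) (h5 : n 5 = m 5) : n = m := by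
  funext k
  by_cases hk : k < 2 ∨ 5 < k
  · rw [h0 k hk, h0' k hk]
  · have hb : 2 ≤ k ∧ k ≤ 5 := by omega
    obtain ⟨hb1, hb2⟩ := hb
    interval_cases k <;> assumption

set_option maxHeartbeats 1600000 in
/-- The signatures `[2^{n₂} 3^{n₃} …]` with `Σ_{k≥2} n_k·C(k,2) = C(5,2) = 10`,
`n_k = 0` outside `2 ≤ k ≤ 5`, satisfying the constraints of Lemma (largepoint), are
exactly `[5^1]`, `[2^4 4^1]`, `[2^4 3^2]`, `[2^7 3^1]`, `[2^{10}]`; in particular the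
solutions `[2^1 3^1 4^1]` and `[2^1 3^3]` of the counting equation fail the constraints. -/
theorem signatures_five_lines :
    (∀ n : ℕ → ℕ,
      ((∀ k, n k ≠ 0 → 2 ≤ k ∧ k ≤ 5) ∧
        (∑ k ∈ Finset.Icc 2 5, n k * Nat.choose k 2) = Nat.choose 5 2 ∧
        LargepointConstraint5 n)
      ↔ (n = (fun k => if k = 5 then 1 else 0) ∨
          n = (fun k => if k = 2 then 4 else if k = 4 then 1 else 0) ∨
          n = (fun k => if k = 2 then 4 else if k = 3 then 2 else 0) ∨
          n = (fun k => if k = 2 then 7 else if k = 3 then 1 else 0) ∨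
          n = (fun k => if k = 2 then 10 else 0))) ∧
    ¬ LargepointConstraint5 (fun k => if k = 2 then 1 else if k = 3 then 1 else if k = 4 then 1 else 0) ∧
    ¬ LargepointConstraint5 (fun k => if k = 2 then 1 else if k = 3 then 3 else 0) := by
  refine ⟨?_, ?_, ?_⟩
  · intro n
    constructor
    · rintro ⟨hsupp, hsum, hlp⟩
      rw [sum_expand, show Nat.choose 5 2 = 10 from rfl] at hsum
      have hzero : ∀ k, k < 2 ∨ 5 < k → n k = 0 := by
        intro k hk
        by_contra h
        have := hsupp k h
        omega
      have key : (n 2 = 0 ∧ n 3 = 0 ∧ n 4 = 0 ∧ n 5 = 1) ∨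
          (n 2 = 4 ∧ n 3 = 0 ∧ n 4 = 1 ∧ n 5 = 0) ∨
          (n 2 = 1 ∧ n 3 = 1 ∧ n 4 = 1 ∧ n 5 = 0) ∨
          (n 2 = 4 ∧ n 3 = 2 ∧ n 4 = 0 ∧ n 5 = 0) ∨
          (n 2 = 1 ∧ n 3 = 3 ∧ n 4 = 0 ∧ n 5 = 0) ∨
          (n 2 = 7 ∧ n 3 = 1 ∧ n 4 = 0 ∧ n 5 = 0) ∨
          (n 2 = 10 ∧ n 3 = 0 ∧ n 4 = 0 ∧ n 5 = 0) := by
        have hc5 : n 5 = 0 ∨ n 5 = 1 := by omega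
        have hc4 : n 4 = 0 ∨ n 4 = 1 := by omega
        have hc3 : n 3 = 0 ∨ n 3 = 1 ∨ n 3 = 2 ∨ n 3 = 3 := by omega
        rcases hc5 with h|h <;> rcases hc4 with h'|h' <;>
          rcases hc3 with h''|h''|h''|h'' <;> omega
      have bad1 : ¬ (n 2 = 1 ∧ n 3 = 1 ∧ n 4 = 1 ∧ n 5 = 0) := by
        rintro ⟨h2, h3, h4, h5⟩
        have h := hlp 1 (by norm_num) (by show 1 ≤ n 4; omega)
        rw [sum_expand', show Nat.choose 1 2 + Nat.choose (5 - 1 - 1) 2 = 3 from rfl] at h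
        omega
      have bad2 : ¬ (n 2 = 1 ∧ n 3 = 3 ∧ n 4 = 0 ∧ n 5 = 0) := by
        rintro ⟨h2, h3, h4, h5⟩
        have h := hlp 2 (by norm_num) (by show 1 ≤ n 3; omega)
        rw [sum_expand', show Nat.choose 2 2 + Nat.choose (5 - 2 - 1) 2 = 2 from rfl] at h
        omega
      have hz' : ∀ (a b c : ℕ) (f : ℕ → ℕ), (∀ k, f k ≠ 0 → 2 ≤ k ∧ k ≤ 5) →
          True := fun _ _ _ _ _ => trivial
      rcases key with ⟨a,b,c,d⟩|⟨a,b,c,d⟩|h|⟨a,b,c,d⟩|h|⟨a,b,c,d⟩|⟨a,b,c,d⟩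
      · exact Or.inl (funeq _ _ hzero (by intro k hk; split_ifs <;> omega)
          a b c d)
      · exact Or.inr (Or.inl (funeq _ _ hzero
          (by intro k hk; split_ifs <;> omega) a b c d))
      · exact absurd h bad1
      · exact Or.inr (Or.inr (Or.inl (funeq _ _ hzero
          (by intro k hk; split_ifs <;> omega) a b c d)))
      · exact absurd h bad2
      · exact Or.inr (Or.inr (Or.inr (Or.inl (funeq _ _ hzero
          (by intro k hk; split_ifs <;> omega) a b c d))))
      · exact Or.inr (Or.inr (Or.inr (Or.inr (funeq _ _ hzero
          (by intro k hk; split_ifs <;> omega) a b c d))))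
    · intro h
      rcases h with rfl|rfl|rfl|rfl|rfl <;>
        refine ⟨fun k hk => by simp only [ne_eq] at hk; split_ifs at hk <;> omega,
          by decide, fun c hc => by interval_cases c <;> decide⟩
  · intro h
    exact absurd (h 1 (by norm_num) (by decide)) (by decide)
  · intro h
    exact absurd (h 2 (by norm_num) (by decide)) (by decide)
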